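/- Let $e_1,\dots,e_{n+1}$ be i.i.d. random variables whose common distribution is atomless (continuous). Let $\hat q$ be the $k$-th order statistic of $e_1,\dots,e_n$ where $k=\lceil (n+1)(1-\alpha)\rceil \le n$. Then $\mathbb{P}[e_{n+1} \le \hat q] \le 1-\alpha + \frac{1}{n+1}$. -/

import Mathlib

open MeasureTheory ProbabilityTheory Finset
open scoped ENNReal NNReal

/-- The `k`-th smallest element of a list of reals (1-indexed). -/
noncomputable def orderStat (l : List ℝ) (k : ℕ) : ℝ :=
  (l.insertionSort (· ≤ ·)).getD (k - 1) 0

section helpers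

lemma orderStat_le_iff (l : List ℝ) (k : ℕ) (hk1 : 1 ≤ k) (hk : k ≤ l.length) (x : ℝ) :
    x ≤ orderStat l k ↔ l.countP (fun y => y < x) ≤ k - 1 := by
  set s := l.insertionSort (· ≤ ·) with hs
  have hperm : s.Perm l := List.perm_insertionSort _ l
  have hlen : s.length = l.length := hperm.length_eq
  have hsorted : List.Pairwise (· ≤ ·) s := List.pairwise_insertionSort _ l
  have hpw := List.pairwise_iff_getElem.mp hsorted
  have hcount : l.countP (fun y => y < x) = s.countP (fun y => y < x) :=
    (hperm.countP_eq _).symm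
  have hk1' : k - 1 < s.length := by omega
  have hos : orderStat l k = s[k-1] := List.getD_eq_getElem s 0 hk1'
  rw [hcount, orderStat] at *
  rw [hos]
  constructor
  · intro hx
    have hsplit := List.take_append_drop (k-1) s
    have h1 : (s.drop (k-1)).countP (fun y => decide (y < x)) = 0 := by
      rw [List.countP_eq_zero]
      intro a ha
      obtain ⟨i, hi, rfl⟩ := List.mem_iff_getElem.mp ha
      rw [List.length_drop] at hi
      rw [List.getElem_drop]
      simp only [decide_eq_true_eq, not_lt]
      refine hx.trans ?_
      rcases Nat.eq_zero_or_pos i with h0 | h0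
      · simp [h0]
      · exact hpw (k-1) (k-1+i) (by omega) (by omega) (by omega)
    have h2 : (s.take (k-1)).countP (fun y => decide (y < x)) ≤ k - 1 := by
      calc (s.take (k-1)).countP _ ≤ (s.take (k-1)).length := List.countP_le_length
        _ ≤ k - 1 := by simp [List.length_take]
    calc s.countP (fun y => decide (y < x))
        = (s.take (k-1) ++ s.drop (k-1)).countP (fun y => decide (y < x)) := by rw [hsplit]
      _ ≤ k - 1 := by rw [List.countP_append, h1]; omega
  · intro hc
    by_contra hx
    push_neg at hx
    have : (s.take k).countP (fun y => decide (y < x)) = (s.take k).length := by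
      rw [List.countP_eq_length]
      intro a ha
      obtain ⟨i, hi, rfl⟩ := List.mem_iff_getElem.mp ha
      rw [List.getElem_take]
      simp only [decide_eq_true_eq]
      rw [List.length_take] at hi
      have hik : i < k := lt_of_lt_of_le hi (min_le_left _ _)
      rcases Nat.lt_or_ge i (k-1) with h | h
      · exact lt_of_le_of_lt (hpw i (k-1) (by omega) hk1' h) hx
      · have : i = k - 1 := by omega
        subst this; exact hx
    have hge : k ≤ s.countP (fun y => decide (y < x)) := by
      calc k = (s.take k).length := by rw [List.length_take]; omega
        _ = (s.take k).countP _ := this.symm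
        _ ≤ s.countP _ := (List.take_sublist k s).countP_le
    omega


lemma card_filter_comp_equiv {m : ℕ} (R : Fin m ≃ Fin m) (p : Fin m → Prop) [DecidablePred p] :
    (univ.filter fun i => p (R i)).card = (univ.filter p).card := by
  apply Finset.card_bij (fun i _ => R i)
  · intro a ha; simp_all
  · intro a _ b _ h; exact R.injective h
  · intro b hb; exact ⟨R.symm b, by simp_all⟩


noncomputable def rnk {m : ℕ} (v : Fin m → ℝ) (i : Fin m) : ℕ :=
  (univ.filter fun j => v j < v i).card

lemma rnk_lt {m : ℕ} (v : Fin m → ℝ) (i : Fin m) (hm : 0 < m) : rnk v i < m := by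
  have : (univ.filter fun j => v j < v i) ⊂ univ := by
    refine Finset.ssubset_univ_iff.mpr ?_
    intro h
    have : i ∈ univ.filter fun j => v j < v i := by rw [h]; exact mem_univ i
    simp at this
  simpa [rnk, Fintype.card_fin] using Finset.card_lt_card this


lemma rnk_inj {m : ℕ} {v : Fin m → ℝ} (hv : Function.Injective v) :
    Function.Injective (rnk v) := by
  intro i j h
  by_contra hij
  have hne : v i ≠ v j := fun hvij => hij (hv hvij)
  have key : ∀ a b : Fin m, v a < v b → rnk v a < rnk v b := by
    intro a b hab
    apply Finset.card_lt_card
    constructor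
    · intro l hl; simp only [mem_filter, mem_univ, true_and] at hl ⊢; exact hl.trans hab
    · intro hsub
      have : a ∈ univ.filter fun j => v j < v b := by simp [hab]
      have := hsub this
      simp at this
  rcases lt_or_gt_of_ne hne with h1 | h1
  · exact absurd h (key i j h1).ne
  · exact absurd h.symm (key j i h1).ne


lemma card_rnk_lt {m : ℕ} {v : Fin m → ℝ} (hv : Function.Injective v) (k : ℕ) (hk : k ≤ m) :
    (univ.filter fun i => rnk v i < k).card = k := by
  rcases Nat.eq_zero_or_pos m with rfl | hm
  · simp; omega
  set R : Fin m ≃ Fin m := Equiv.ofBijective (fun i => (⟨rnk v i, rnk_lt v i hm⟩ : Fin m))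
    ((Fintype.bijective_iff_injective_and_card _).mpr
      ⟨fun a b h => rnk_inj hv (by simpa using congrArg Fin.val h), rfl⟩) with hR
  have h1 : (univ.filter fun i => rnk v i < k).card
      = (univ.filter fun j : Fin m => (j : ℕ) < k).card := by
    have := card_filter_comp_equiv R (fun j : Fin m => (j : ℕ) < k)
    simpa [hR, Equiv.ofBijective] using this
  rw [h1]
  have h2 : (univ.filter fun j : Fin m => (j : ℕ) < k).card = (Finset.range k).card := by
    refine Finset.card_bij (fun (j : Fin m) _ => (j : ℕ)) ?_ ?_ ?_
    · intro a ha; simp only [mem_filter] at ha; exact Finset.mem_range.mpr ha.2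
    · intro a _ b _ h; exact Fin.val_injective h
    · intro b hb
      have hbk : b < k := Finset.mem_range.mp hb
      exact ⟨⟨b, lt_of_lt_of_le hbk hk⟩, by simp [hbk], rfl⟩
  rw [h2, Finset.card_range]


lemma countP_ofFn {m : ℕ} (f : Fin m → ℝ) (p : ℝ → Bool) :
    (List.ofFn f).countP p = (univ.filter fun i => p (f i)).card := by
  rw [Finset.card_filter]
  induction m with
  | zero => simp
  | succ m ih =>
      rw [List.ofFn_succ, List.countP_cons, Fin.sum_univ_succ, ih]
      rcases h : p (f 0) <;> simp [h] <;> omega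

end helpers

/-- Conformal coverage upper bound: for i.i.d. samples from an atomless
(continuous) distribution, the coverage probability is at most
`1 - α + 1/(n+1)`. -/
theorem conformal_coverage_upper
    {Ω : Type*} [MeasureSpace Ω] [IsProbabilityMeasure (ℙ : Measure Ω)]
    {n : ℕ} (hn : 1 ≤ n) (α : ℝ) (hα : 0 < α) (hα1 : α < 1)
    (e : Fin (n + 1) → Ω → ℝ) (hmeas : ∀ i, Measurable (e i))
    (hindep : iIndepFun e ℙ)
    (hident : ∀ i j, IdentDistrib (e i) (e j) ℙ ℙ)
    (hatomless : ∀ i (x : ℝ), Measure.map (e i) ℙ {x} = 0)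
    (k : ℕ) (hk : k = ⌈((n : ℝ) + 1) * (1 - α)⌉₊) (hkn : k ≤ n)
    (qhat : Ω → ℝ)
    (hq : ∀ ω, qhat ω = orderStat (List.ofFn (fun i : Fin n => e i.castSucc ω)) k) :
    ℙ {ω | e (Fin.last n) ω ≤ qhat ω} ≤ ENNReal.ofReal (1 - α + 1 / ((n : ℝ) + 1)) := by
  classical
  have hnpos : (0:ℝ) < (n:ℝ) + 1 := by positivity
  have hk1 : 1 ≤ k := by
    rw [hk]; exact Nat.one_le_ceil_iff.mpr (by nlinarith)
  set μ : Measure ℝ := Measure.map (e 0) ℙ with hμ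
  haveI : IsProbabilityMeasure μ := Measure.isProbabilityMeasure_map (hmeas 0).aemeasurable
  set X : Ω → (Fin (n+1) → ℝ) := fun ω i => e i ω with hXdef
  have hX : Measurable X := measurable_pi_lambda X (fun i => hmeas i)
  set ν : Measure (Fin (n+1) → ℝ) := Measure.pi (fun _ => μ) with hν
  -- joint law is the product measure
  have hmap : Measure.map X ℙ = ν := by
    rw [hν]
    refine (Measure.pi_eq fun s hs => ?_).symm
    rw [Measure.map_apply hX (MeasurableSet.univ_pi hs)]
    have hpre : X ⁻¹' (Set.pi Set.univ s) = ⋂ i, e i ⁻¹' s i := by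
      ext ω; simp [X, Set.mem_pi]
    rw [hpre]
    have h2 := hindep.measure_inter_preimage_eq_mul Finset.univ
      (sets := fun i => s i) (fun i _ => hs i)
    simp only [Finset.mem_univ, Set.iInter_true, Set.biInter_univ] at h2
    rw [h2]
    refine Finset.prod_congr rfl fun i _ => ?_
    rw [← Measure.map_apply (hmeas i) (hs i), (hident i 0).map_eq]
  -- the events
  set T : Fin (n+1) → Set (Fin (n+1) → ℝ) := fun i => {v | rnk v i < k} with hT
  have hrnkmeas : ∀ i : Fin (n+1), Measurable fun v : Fin (n+1) → ℝ => rnk v i := by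
    intro i
    have : (fun v : Fin (n+1) → ℝ => rnk v i)
        = fun v => ∑ j, if v j < v i then 1 else 0 := by
      funext v; rw [rnk, Finset.card_filter]
    rw [this]
    exact Finset.measurable_sum _ fun j _ =>
      Measurable.ite (measurableSet_lt (measurable_pi_apply j) (measurable_pi_apply i))
        measurable_const measurable_const
  have hTmeas : ∀ i, MeasurableSet (T i) := fun i =>
    measurableSet_lt (hrnkmeas i) measurable_const
  -- event identification
  have hevent : {ω | e (Fin.last n) ω ≤ qhat ω} = X ⁻¹' (T (Fin.last n)) := by
    ext ω
    simp only [Set.mem_setOf_eq, Set.mem_preimage, T, hq ω]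
    rw [orderStat_le_iff _ k hk1 (by simp [List.length_ofFn, hkn]),
      countP_ofFn]
    have hcard : (univ.filter fun i : Fin n =>
        decide (e i.castSucc ω < e (Fin.last n) ω)).card = rnk (X ω) (Fin.last n) := by
      rw [rnk]
      refine Finset.card_bij (fun (i : Fin n) _ => i.castSucc) ?_ ?_ ?_
      · intro a ha; simp only [mem_filter, mem_univ, true_and, decide_eq_true_eq] at ha ⊢
        exact ha
      · intro a _ b _ h; exact Fin.castSucc_injective n h
      · intro j hj
        simp only [mem_filter, mem_univ, true_and] at hj
        have hne : j ≠ Fin.last n := by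
          intro h; rw [h] at hj; exact lt_irrefl _ hj
        obtain ⟨i, rfl⟩ := Fin.exists_castSucc_eq.mpr hne
        exact ⟨i, by simpa using hj, rfl⟩
    rw [hcard]
    omega
  -- exchangeability : all T i have the same measure
  have hexch : ∀ i : Fin (n+1), ν (T i) = ν (T (Fin.last n)) := by
    intro i
    set σ : Fin (n+1) ≃ Fin (n+1) := Equiv.swap i (Fin.last n) with hσ
    have mp : MeasurePreserving (MeasurableEquiv.piCongrLeft (fun _ : Fin (n+1) => ℝ) σ) ν ν :=
      measurePreserving_piCongrLeft (fun _ => μ) σ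
    have hpre : (MeasurableEquiv.piCongrLeft (fun _ : Fin (n+1) => ℝ) σ) ⁻¹' (T i)
        = T (Fin.last n) := by
      ext v
      have hΦ : ∀ j, (MeasurableEquiv.piCongrLeft (fun _ : Fin (n+1) => ℝ) σ) v j = v (σ j) := by
        intro j
        conv_lhs => rw [show j = σ (σ.symm j) by simp]
        rw [MeasurableEquiv.piCongrLeft_apply_apply]
        rw [hσ, Equiv.symm_swap]
      simp only [Set.mem_preimage, T, Set.mem_setOf_eq, rnk]
      have : (univ.filter fun j => (MeasurableEquiv.piCongrLeft (fun _ : Fin (n+1) => ℝ) σ) v j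
          < (MeasurableEquiv.piCongrLeft (fun _ : Fin (n+1) => ℝ) σ) v i)
          = univ.filter fun j => v (σ j) < v (Fin.last n) := by
        refine Finset.filter_congr fun j _ => ?_
        rw [hΦ j, hΦ i, hσ, Equiv.swap_apply_left]
      rw [this]
      rw [show (univ.filter fun j => v (σ j) < v (Fin.last n)).card
        = (univ.filter fun j => v j < v (Fin.last n)).card from
        card_filter_comp_equiv σ (fun j => v j < v (Fin.last n))]
    calc ν (T i) = ν ((MeasurableEquiv.piCongrLeft (fun _ : Fin (n+1) => ℝ) σ) ⁻¹' (T i)) :=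
          (mp.measure_preimage_equiv _).symm
      _ = ν (T (Fin.last n)) := by rw [hpre]
  -- ties are null
  have hpair : ∀ i j : Fin (n+1), i ≠ j → ν {v : Fin (n+1) → ℝ | v i = v j} = 0 := by
    intro i j hij
    have hset : MeasurableSet {v : Fin (n+1) → ℝ | v i = v j} :=
      measurableSet_eq_fun (measurable_pi_apply i) (measurable_pi_apply j)
    rw [← hmap, Measure.map_apply hX hset]
    have : X ⁻¹' {v | v i = v j} = {ω | e i ω = e j ω} := rfl
    rw [this]
    have h1 : IndepFun (e i) (e j) ℙ := hindep.indepFun hij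
    have h2 := (indepFun_iff_map_prod_eq_prod_map_map (hmeas i).aemeasurable
      (hmeas j).aemeasurable).mp h1
    have hdiag : MeasurableSet {p : ℝ × ℝ | p.1 = p.2} :=
      measurableSet_eq_fun measurable_fst measurable_snd
    have h3 : {ω | e i ω = e j ω} = (fun ω => (e i ω, e j ω)) ⁻¹' {p : ℝ × ℝ | p.1 = p.2} := rfl
    rw [h3, ← Measure.map_apply ((hmeas i).prodMk (hmeas j)) hdiag, h2,
      Measure.prod_apply hdiag]
    have h4 : ∀ x : ℝ, (Prod.mk x ⁻¹' {p : ℝ × ℝ | p.1 = p.2}) = {x} := by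
      intro x; ext y; simp [eq_comm]
    calc ∫⁻ x, (Measure.map (e j) ℙ) (Prod.mk x ⁻¹' {p : ℝ × ℝ | p.1 = p.2})
          ∂(Measure.map (e i) ℙ)
        = ∫⁻ _, 0 ∂(Measure.map (e i) ℙ) := by
          refine lintegral_congr fun x => ?_
          rw [h4 x, hatomless j x]
      _ = 0 := lintegral_zero
  set Bad : Set (Fin (n+1) → ℝ) := ⋃ (i) (j) (_ : i ≠ j), {v : Fin (n+1) → ℝ | v i = v j}
    with hBadDef
  have hBad : ν Bad = 0 :=
    measure_iUnion_null fun i => measure_iUnion_null fun j =>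
      measure_iUnion_null fun hij => hpair i j hij
  -- sum of indicator measures equals k
  have hptwise : ∀ v : Fin (n+1) → ℝ, v ∉ Bad →
      (∑ i : Fin (n+1), (T i).indicator (fun _ => (1:ℝ≥0∞)) v) = (k : ℝ≥0∞) := by
    intro v hv
    have hinj : Function.Injective v := by
      intro a b hab
      by_contra hne
      exact hv (Set.mem_iUnion.mpr ⟨a, Set.mem_iUnion.mpr ⟨b, Set.mem_iUnion.mpr ⟨hne, hab⟩⟩⟩)
    have h1 : ∀ i, (T i).indicator (fun _ => (1:ℝ≥0∞)) v
        = if rnk v i < k then (1:ℝ≥0∞) else 0 := by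
      intro i; rw [Set.indicator_apply]; rfl
    calc (∑ i : Fin (n+1), (T i).indicator (fun _ => (1:ℝ≥0∞)) v)
        = ∑ i : Fin (n+1), if rnk v i < k then (1:ℝ≥0∞) else 0 := by
          exact Finset.sum_congr rfl fun i _ => h1 i
      _ = ((univ.filter fun i : Fin (n+1) => rnk v i < k).card : ℝ≥0∞) := by
          rw [Finset.card_filter]; push_cast
          exact (Finset.sum_congr rfl fun i _ => by split <;> simp).symm
      _ = (k : ℝ≥0∞) := by rw [card_rnk_lt hinj k (by omega)]
  have hkey : ∑ i : Fin (n+1), ν (T i) = (k : ℝ≥0∞) := by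
    calc ∑ i : Fin (n+1), ν (T i)
        = ∑ i : Fin (n+1), ∫⁻ v, (T i).indicator (fun _ => (1:ℝ≥0∞)) v ∂ν := by
          exact Finset.sum_congr rfl fun i _ => (lintegral_indicator_one (hTmeas i)).symm
      _ = ∫⁻ v, ∑ i : Fin (n+1), (T i).indicator (fun _ => (1:ℝ≥0∞)) v ∂ν :=
          (lintegral_finset_sum _ fun i _ => (measurable_one.indicator (hTmeas i))).symm
      _ = ∫⁻ _, (k : ℝ≥0∞) ∂ν := by
          refine lintegral_congr_ae (ae_iff.mpr (measure_mono_null ?_ hBad))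
          intro v hv
          simp only [Set.mem_setOf_eq] at hv
          by_contra hvB
          exact hv (hptwise v hvB)
      _ = (k : ℝ≥0∞) := by
          haveI : IsProbabilityMeasure ν := by
            rw [hν]; infer_instance
          rw [lintegral_const, measure_univ, mul_one]
  have hconst : ((n:ℝ≥0∞) + 1) * ν (T (Fin.last n)) = (k : ℝ≥0∞) := by
    rw [← hkey, Finset.sum_congr rfl fun i _ => hexch i, Finset.sum_const, card_univ,
      Fintype.card_fin, nsmul_eq_mul]
    push_cast
    ring
  -- conclude
  rw [hevent, ← hmap, ← Measure.map_apply hX (hTmeas (Fin.last n))] at *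
  have hval : Measure.map X ℙ (T (Fin.last n)) = (k : ℝ≥0∞) / ((n:ℝ≥0∞) + 1) :=
    (ENNReal.eq_div_iff (by simp) (by simp)).mpr hconst
  rw [hval]
  have hreal : (k:ℝ)/((n:ℝ)+1) ≤ 1 - α + 1/((n:ℝ)+1) := by
    have hkle : (k:ℝ) ≤ ((n:ℝ)+1)*(1-α)+1 := by
      rw [hk]; exact (Nat.ceil_lt_add_one (by nlinarith)).le
    rw [div_le_iff₀ hnpos]
    have h1 : (1/((n:ℝ)+1))*((n:ℝ)+1) = 1 := by field_simp
    nlinarith [h1]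
  calc (k:ℝ≥0∞)/((n:ℝ≥0∞)+1) = ENNReal.ofReal ((k:ℝ)/((n:ℝ)+1)) := by
        rw [ENNReal.ofReal_div_of_pos hnpos, ENNReal.ofReal_natCast]
        congr 1
        rw [ENNReal.ofReal_add (by positivity) zero_le_one]
        simp
    _ ≤ ENNReal.ofReal (1 - α + 1/((n:ℝ)+1)) := ENNReal.ofReal_le_ofReal hreal
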